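/- Let A be a commutative monoid with zigzag data of length n ≥ 2 (cᵢ, dᵢ, aⱼ, b satisfying the Isbell zigzag equations). Then the shortened data c₂,…,cₙ, d₂,…,dₙ with new spine d₁·a₃, a₄,…,a_{2n+1} and the same value b satisfies the Isbell zigzag equations of length n−1. -/

import Mathlib

/-- The Isbell zigzag equations of length `n` for data `c, d` (witnesses,
indexed `1,…,n`), spine `a` (indexed `1,…,2n+1`) and value `b`.
For `n = 0` they reduce to `a 1 = b`. -/
def IsZigzag {A : Type*} [CommMonoid A] (n : ℕ) (c d a : ℕ → A) (b : A) : Prop :=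
  if n = 0 then a 1 = b else
    b = a 1 * c 1 ∧
    a 1 = d 1 * a 2 ∧
    (∀ i, 1 ≤ i → i < n → a (2 * i) * c i = a (2 * i + 1) * c (i + 1)) ∧
    (∀ i, 1 ≤ i → i < n → d i * a (2 * i + 1) = d (i + 1) * a (2 * (i + 1))) ∧
    a (2 * n) * c n = a (2 * n + 1) ∧
    d n * a (2 * n + 1) = b

theorem zigzag_shorten {A : Type*} [CommMonoid A] (n : ℕ) (hn : 2 ≤ n)
    (c d a : ℕ → A) (b : A)
    (hzig : IsZigzag n c d a b) :
    IsZigzag (n - 1) (fun i => c (i + 1)) (fun i => d (i + 1))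
      (fun j => if j = 1 then d 1 * a 3 else a (j + 2)) b := by
  obtain ⟨m, rfl⟩ : ∃ m, n = m + 2 := ⟨n - 2, by omega⟩
  rw [IsZigzag] at hzig
  simp only [if_neg (by omega : m + 2 ≠ 0)] at hzig
  obtain ⟨h1, h2, h3, h4, h5, h6⟩ := hzig
  rw [IsZigzag]
  simp only [show m + 2 - 1 = m + 1 by omega, if_neg (by omega : m + 1 ≠ 0)]
  refine ⟨?_, ?_, ?_, ?_, ?_, ?_⟩
  · -- b = (d 1 * a 3) * c 2
    have e3 := h3 1 le_rfl (by omega)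
    show b = d 1 * a 3 * c 2
    calc b = a 1 * c 1 := h1
    _ = d 1 * (a 2 * c 1) := by rw [h2, mul_assoc]
    _ = d 1 * (a 3 * c 2) := by rw [show a 2 * c 1 = a 3 * c 2 by simpa using e3]
    _ = d 1 * a 3 * c 2 := (mul_assoc _ _ _).symm
  · -- d 1 * a 3 = d 2 * a 4
    have e4 := h4 1 le_rfl (by omega)
    norm_num at e4
    show d 1 * a 3 = d 2 * a 4
    exact e4
  · intro i hi1 hi2
    have e3 := h3 (i + 1) (by omega) (by omega)
    simp only [if_neg (by omega : 2 * i ≠ 1), if_neg (by omega : 2 * i + 1 ≠ 1)]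
    have : 2 * (i + 1) = 2 * i + 2 := by ring
    rw [this] at e3
    simpa [show 2 * i + 1 + 2 = 2 * i + 2 + 1 by ring] using e3
  · intro i hi1 hi2
    have e4 := h4 (i + 1) (by omega) (by omega)
    simp only [if_neg (by omega : 2 * i + 1 ≠ 1)]
    have h2i : 2 * (i + 1) = 2 * i + 2 := by ring
    have h2i2 : 2 * (i + 1 + 1) = 2 * (i + 1) + 2 := by ring
    rw [h2i, h2i2, h2i] at e4
    simpa [h2i, show 2 * i + 1 + 2 = 2 * i + 2 + 1 by ring] using e4
  · simp only [if_neg (by omega : 2 * (m + 1) ≠ 1),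
      if_neg (by omega : 2 * (m + 1) + 1 ≠ 1)]
    have : 2 * (m + 1) + 2 = 2 * (m + 2) := by ring
    rw [this, show 2 * (m + 1) + 1 + 2 = 2 * (m + 2) + 1 by ring]
    exact h5
  · simp only [if_neg (by omega : 2 * (m + 1) + 1 ≠ 1)]
    rw [show 2 * (m + 1) + 1 + 2 = 2 * (m + 2) + 1 by ring]
    exact h6
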